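/- Let L be symmetric, D positive definite diagonal, λ₁ = min_{xᵀDx=1} xᵀLx attained by v₁, with λ₁ a simple generalized eigenvalue. If X* ⪰ 0 satisfies X* ∘ D = 1 and X* ∘ L = λ₁, then X* = v₁v₁ᵀ, a rank-one matrix. -/

import Mathlib

open Matrix

lemma my_trace_ctc_zero {m : ℕ} (C : Matrix (Fin m) (Fin m) ℝ)
    (h : (Cᴴ * C).trace = 0) : C = 0 := by
  have key : ∀ j i, C i j = 0 := by
    have h1 : (Cᴴ * C).trace = ∑ j, ∑ i, C i j * C i j := by
      simp [Matrix.trace, Matrix.mul_apply, Matrix.diag, Matrix.conjTranspose_apply]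
    rw [h1] at h
    intro j i
    have hnn : ∀ j ∈ Finset.univ, (0:ℝ) ≤ ∑ i, C i j * C i j :=
      fun j _ => Finset.sum_nonneg fun i _ => mul_self_nonneg _
    have h2 := (Finset.sum_eq_zero_iff_of_nonneg hnn).mp h j (Finset.mem_univ j)
    have h3 := (Finset.sum_eq_zero_iff_of_nonneg
      (fun i _ => mul_self_nonneg (C i j))).mp h2 i (Finset.mem_univ i)
    exact mul_self_eq_zero.mp h3
  ext i j; exact key j i

lemma my_M_posSemidef {n : ℕ} (L : Matrix (Fin n) (Fin n) ℝ) (hL : L.IsSymm)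
    (d : Fin n → ℝ) (hd : ∀ i, 0 < d i)
    (D : Matrix (Fin n) (Fin n) ℝ) (hD : D = Matrix.diagonal d)
    (lam₁ : ℝ)
    (hmin : ∀ x : Fin n → ℝ, x ⬝ᵥ D.mulVec x = 1 → lam₁ ≤ x ⬝ᵥ L.mulVec x) :
    (L - lam₁ • D).PosSemidef := by
  have hDh : D.IsHermitian := by rw [hD]; exact Matrix.isHermitian_diagonal d
  have hLh : L.IsHermitian := by
    rw [Matrix.IsHermitian, Matrix.conjTranspose_eq_transpose_of_trivial]; exact hL
  refine Matrix.PosSemidef.of_dotProduct_mulVec_nonneg ?_ ?_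
  · rw [Matrix.IsHermitian, Matrix.conjTranspose_sub, Matrix.conjTranspose_smul,
      hLh.eq, hDh.eq, star_trivial]
  · intro x
    rcases eq_or_ne x 0 with rfl | hx
    · simp
    · have hs : 0 < x ⬝ᵥ D.mulVec x := by
        have he : x ⬝ᵥ D.mulVec x = ∑ i, d i * (x i * x i) := by
          rw [hD]; simp [Matrix.mulVec_diagonal, dotProduct]; ring_nf
          exact Finset.sum_congr rfl fun i _ => by ring
        rw [he]
        obtain ⟨i, hi⟩ := Function.ne_iff.mp hx
        exact Finset.sum_pos' (fun i _ => mul_nonneg (hd i).le (mul_self_nonneg _))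
          ⟨i, Finset.mem_univ i, mul_pos (hd i) (mul_self_pos.mpr hi)⟩
      set s := x ⬝ᵥ D.mulVec x with hsdef
      set c := Real.sqrt s with hc
      have hcpos : 0 < c := Real.sqrt_pos.mpr hs
      have hcc : c * c = s := Real.mul_self_sqrt hs.le
      have hy : (c⁻¹ • x) ⬝ᵥ D.mulVec (c⁻¹ • x) = 1 := by
        rw [Matrix.mulVec_smul, smul_dotProduct, dotProduct_smul,
          smul_eq_mul, smul_eq_mul, ← hsdef]
        field_simp
        nlinarith
      have h1 := hmin _ hy
      rw [Matrix.mulVec_smul, smul_dotProduct, dotProduct_smul,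
        smul_eq_mul, smul_eq_mul] at h1
      have h2 : lam₁ * s ≤ x ⬝ᵥ L.mulVec x := by
        have h3 := mul_le_mul_of_nonneg_left h1 (mul_pos hcpos hcpos).le
        have h4 : c * c * (c⁻¹ * (c⁻¹ * (x ⬝ᵥ L.mulVec x))) = x ⬝ᵥ L.mulVec x := by
          field_simp
        rw [h4, hcc] at h3
        linarith [h3, mul_comm lam₁ s]
      simp only [Matrix.sub_mulVec, Matrix.smul_mulVec, dotProduct_sub,
        dotProduct_smul, smul_eq_mul, star_trivial]
      linarith

theorem Xstar_eq_rank_one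
    {n : ℕ} (L : Matrix (Fin n) (Fin n) ℝ) (hL : L.IsSymm)
    (d : Fin n → ℝ) (hd : ∀ i, 0 < d i)
    (D : Matrix (Fin n) (Fin n) ℝ) (hD : D = Matrix.diagonal d)
    (lam₁ : ℝ) (v₁ : Fin n → ℝ)
    (hv₁D : v₁ ⬝ᵥ D.mulVec v₁ = 1)
    (hv₁eig : L.mulVec v₁ = lam₁ • D.mulVec v₁)
    (hmin : ∀ x : Fin n → ℝ, x ⬝ᵥ D.mulVec x = 1 → lam₁ ≤ x ⬝ᵥ L.mulVec x)
    (hsimple : ∀ v : Fin n → ℝ, L.mulVec v = lam₁ • D.mulVec v → ∃ c : ℝ, v = c • v₁)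
    (Xstar : Matrix (Fin n) (Fin n) ℝ) (hX : Xstar.PosSemidef)
    (hXD : (Xstar * D).trace = 1)
    (hXL : (Xstar * L).trace = lam₁) :
    Xstar = Matrix.vecMulVec v₁ v₁ := by
  have hM : (L - lam₁ • D).PosSemidef := my_M_posSemidef L hL d hd D hD lam₁ hmin
  set M := L - lam₁ • D with hMdef
  obtain ⟨A, hA⟩ : ∃ A : Matrix (Fin n) (Fin n) ℝ, M = Aᴴ * A := by
    open MatrixOrder in
    obtain ⟨X, hX, -, hXX⟩ := CFC.exists_sqrt_of_isSelfAdjoint_of_quasispectrumRestricts hM.isHermitian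
      (QuasispectrumRestricts.nnreal_of_nonneg hM.nonneg)
    have h' : star X * X = M := by rw [hX.star_eq]; exact hXX
    exact ⟨X, h'.symm⟩
  obtain ⟨B, hB⟩ : ∃ B : Matrix (Fin n) (Fin n) ℝ, Xstar = Bᴴ * B := by
    open MatrixOrder in
    obtain ⟨X, hX, -, hXX⟩ := CFC.exists_sqrt_of_isSelfAdjoint_of_quasispectrumRestricts hX.isHermitian
      (QuasispectrumRestricts.nnreal_of_nonneg hX.nonneg)
    have h' : star X * X = Xstar := by rw [hX.star_eq]; exact hXX
    exact ⟨X, h'.symm⟩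
  have htr : (Xstar * M).trace = 0 := by
    rw [hMdef, Matrix.mul_sub, Matrix.mul_smul, Matrix.trace_sub, Matrix.trace_smul,
      hXL, hXD, smul_eq_mul, mul_one, sub_self]
  have e1 : (A * Bᴴ)ᴴ * (A * Bᴴ) = (B * Aᴴ * A) * Bᴴ := by
    rw [Matrix.conjTranspose_mul, Matrix.conjTranspose_conjTranspose]
    simp only [Matrix.mul_assoc]
  have hcyc : ((A * Bᴴ)ᴴ * (A * Bᴴ)).trace = (Xstar * M).trace := by
    rw [e1, Matrix.trace_mul_comm]
    congr 1
    rw [hA, hB]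
    simp only [Matrix.mul_assoc]
  have hABt : A * Bᴴ = 0 := my_trace_ctc_zero _ (by rw [hcyc, htr])
  have hBAt : B * Aᴴ = 0 := by
    have := congrArg Matrix.conjTranspose hABt
    rwa [Matrix.conjTranspose_mul, Matrix.conjTranspose_conjTranspose,
      Matrix.conjTranspose_zero] at this
  have hXM : Xstar * M = 0 := by
    have e2 : Bᴴ * B * (Aᴴ * A) = Bᴴ * ((B * Aᴴ) * A) := by simp only [Matrix.mul_assoc]
    rw [hA, hB, e2, hBAt, Matrix.zero_mul, Matrix.mul_zero]
  have hMX : M * Xstar = 0 := by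
    have h1 : (Xstar * M)ᴴ = Mᴴ * Xstarᴴ := Matrix.conjTranspose_mul _ _
    rw [hXM, hM.isHermitian.eq, hX.isHermitian.eq, Matrix.conjTranspose_zero] at h1
    exact h1.symm
  have hcol : ∀ j, ∃ c : ℝ, (fun i => Xstar i j) = c • v₁ := by
    intro j
    apply hsimple
    have h0 : M.mulVec (fun i => Xstar i j) = 0 := by
      funext i
      have := congrFun (congrFun hMX i) j
      simpa [Matrix.mul_apply, Matrix.mulVec, dotProduct] using this
    have h1 : L.mulVec (fun i => Xstar i j) - lam₁ • D.mulVec (fun i => Xstar i j) = 0 := by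
      rw [← Matrix.smul_mulVec, ← Matrix.sub_mulVec]
      exact h0
    exact sub_eq_zero.mp h1
  choose c hc using hcol
  have hXij : ∀ i j, Xstar i j = c j * v₁ i := by
    intro i j
    have := congrFun (hc j) i
    simpa using this
  obtain ⟨i₀, hi₀⟩ : ∃ i₀, v₁ i₀ ≠ 0 := by
    by_contra h
    push_neg at h
    have h0 : v₁ ⬝ᵥ D.mulVec v₁ = 0 := by simp [dotProduct, h]
    rw [hv₁D] at h0
    exact one_ne_zero h0
  have hsym : ∀ i j, Xstar j i = Xstar i j := by
    intro i j
    have := congrFun (congrFun hX.isHermitian.eq i) j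
    simpa [Matrix.conjTranspose_apply] using this
  set t := c i₀ / v₁ i₀ with ht
  have hcj : ∀ j, c j = t * v₁ j := by
    intro j
    have h : c j * v₁ i₀ = c i₀ * v₁ j := by
      rw [← hXij i₀ j, ← hXij j i₀]
      exact hsym j i₀
    have h2 : t * v₁ j = c j := by
      rw [ht, div_mul_eq_mul_div, ← h, mul_div_assoc, div_self hi₀, mul_one]
    exact h2.symm
  have htrace : (Xstar * D).trace = t * (v₁ ⬝ᵥ D.mulVec v₁) := by
    rw [hD]
    have lhs : (Xstar * Matrix.diagonal d).trace = ∑ i, Xstar i i * d i := by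
      simp [Matrix.trace, Matrix.diag, Matrix.mul_apply, Matrix.diagonal_apply, mul_ite,
        mul_zero]
    have rhs : v₁ ⬝ᵥ (Matrix.diagonal d).mulVec v₁ = ∑ i, v₁ i * (d i * v₁ i) := by
      simp [dotProduct, Matrix.mulVec_diagonal]
    rw [lhs, rhs, Finset.mul_sum]
    refine Finset.sum_congr rfl fun i _ => ?_
    rw [hXij i i, hcj i]
    ring
  have htone : t = 1 := by
    rw [htrace, hv₁D, mul_one] at hXD
    exact hXD
  ext i j
  rw [Matrix.vecMulVec_apply, hXij i j, hcj j, htone]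
  ring
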